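/- Let h : {1, 2, 3, …} → ℚ satisfy h₁ = 1 and the recursion h_{n+1} = Σ_{l=1}^{n} ((2n−1)! · l² · (n+1−l)²) / ((2l−2)! · (2(n−l))! · (n+1)) · h_l · h_{n+1−l} for all n ≥ 1, and set φ(z) = Σ_{n≥1} n·h_n·zⁿ/(2n−2)! ∈ ℚ[[z]]. Then there exists a unique formal power series u ∈ ℚ[[z]] with constant term 1 such that u² = 1 − 2φ, and this u satisfies the transcendental equation (1 − u)·exp(u − 1) = z in ℚ[[z]], where exp(u−1) denotes the formal exponential of the power series u − 1 (which has zero constant term). -/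

import Mathlib

open PowerSeries

/-- The one-variable series `φ(z) = Σ_{n≥1} n·h_n·zⁿ/(2n−2)!` in `ℚ[[z]]`
(the `n = 0` term vanishes because of the factor `n`). -/
noncomputable def phiSeries (h : ℕ → ℚ) : PowerSeries ℚ :=
  PowerSeries.mk fun n => (n : ℚ) * h n / ((2 * n - 2).factorial : ℚ)

/-- The formal exponential `exp(v) = Σ_k vᵏ/k!` of a power series `v`.  For `v` with
zero constant term the `n`-th coefficient only receives contributions from `k ≤ n`,
so it is the finite sum `Σ_{k=0}^{n} coeff n (vᵏ)/k!`. -/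
noncomputable def expOf (v : PowerSeries ℚ) : PowerSeries ℚ :=
  PowerSeries.mk fun n =>
    ∑ k ∈ Finset.range (n + 1), PowerSeries.coeff n (v ^ k) / (k.factorial : ℚ)

namespace TranscendentalAux

open Finset

lemma coeff_pow_eq_zero' {v : PowerSeries ℚ} (hv : constantCoeff v = 0)
    {k j : ℕ} (hj : j < k) : coeff j (v ^ k) = 0 := by
  have hdvd : (X : ℚ⟦X⟧) ^ k ∣ v ^ k :=
    pow_dvd_pow_of_dvd (X_dvd_iff.mpr hv) k
  exact (X_pow_dvd_iff.mp hdvd) j hj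

lemma constantCoeff_expOf (v : PowerSeries ℚ) : constantCoeff (expOf v) = 1 := by
  rw [expOf, ← coeff_zero_eq_constantCoeff, coeff_mk]
  simp

lemma coeff_mul_expOf {v : PowerSeries ℚ} (hv : constantCoeff v = 0)
    (f : PowerSeries ℚ) (n : ℕ) :
    coeff n (f * expOf v) =
      ∑ k ∈ range (n + 1), coeff n (f * v ^ k) / (k.factorial : ℚ) := by
  rw [coeff_mul]
  have step1 : ∀ p ∈ antidiagonal n,
      coeff p.1 f * coeff p.2 (expOf v) =
      ∑ k ∈ range (n + 1), coeff p.1 f * coeff p.2 (v ^ k) / (k.factorial : ℚ) := by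
    intro p hp
    have hp2 : p.2 ≤ n := by
      have := Finset.HasAntidiagonal.mem_antidiagonal.mp hp; omega
    rw [expOf, coeff_mk, Finset.mul_sum]
    refine Finset.sum_subset (Finset.range_subset_range.mpr (by omega : p.2 + 1 ≤ n + 1)) ?_ |>.trans ?_
    · intro k hk hk2
      have : p.2 < k := by simp only [mem_range] at hk hk2; omega
      rw [coeff_pow_eq_zero' hv this]
      simp
    · exact Finset.sum_congr rfl fun k _ => by ring
  rw [Finset.sum_congr rfl step1, Finset.sum_comm]
  refine Finset.sum_congr rfl fun k _ => ?_
  rw [coeff_mul, Finset.sum_div]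

lemma derivative_expOf {v : PowerSeries ℚ} (hv : constantCoeff v = 0) :
    d⁄dX ℚ (expOf v) = d⁄dX ℚ v * expOf v := by
  ext n
  rw [coeff_derivative, coeff_mul_expOf hv]
  rw [expOf, coeff_mk, Finset.sum_mul]
  rw [Finset.sum_range_succ']
  have h0 : coeff (n + 1) (v ^ 0) / ((Nat.factorial 0 : ℕ) : ℚ) * ((n : ℚ) + 1) = 0 := by
    norm_num
  rw [h0, add_zero]
  refine Finset.sum_congr rfl fun j _ => ?_
  have hD : coeff n (d⁄dX ℚ (v ^ (j + 1))) = coeff (n + 1) (v ^ (j + 1)) * ((n : ℚ) + 1) := by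
    rw [coeff_derivative]
  have hL : d⁄dX ℚ (v ^ (j + 1)) = (j + 1 : ℕ) • (v ^ j • d⁄dX ℚ v) := by
    simpa using Derivation.leibniz_pow (d⁄dX ℚ) (j + 1) (a := v)
  have hA : coeff (n + 1) (v ^ (j + 1)) * ((n : ℚ) + 1)
      = ((j : ℚ) + 1) * coeff n (v ^ j * d⁄dX ℚ v) := by
    have h2 := congrArg (coeff n) hL
    rw [map_nsmul, smul_eq_mul, nsmul_eq_mul] at h2
    push_cast at h2
    linear_combination h2 - hD
  have hjf : ((j + 1).factorial : ℚ) = ((j : ℚ) + 1) * (j.factorial : ℚ) := by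
    rw [Nat.factorial_succ]; push_cast; ring
  have hj0 : ((j : ℚ) + 1) ≠ 0 := by positivity
  have hjf0 : (j.factorial : ℚ) ≠ 0 := by
    exact_mod_cast (Nat.factorial_pos j).ne'
  field_simp [hjf]
  rw [mul_comm (d⁄dX ℚ v) (v ^ j)]
  linear_combination (j.factorial : ℚ) * hA - coeff n (v ^ j * d⁄dX ℚ v) * hjf

/-- The core transcendental identity: if `ψ = X·(1−ψ)·ψ′` and `ψ′(0) = 1`,
then `ψ·exp(−ψ) = X`. -/
lemma core {ψ : PowerSeries ℚ} (H1 : ψ = X * ((1 - ψ) * d⁄dX ℚ ψ))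
    (H2 : coeff 1 ψ = 1) : ψ * expOf (-ψ) = X := by
  have hψ0 : constantCoeff ψ = 0 := by
    rw [H1, map_mul, constantCoeff_X, zero_mul]
  have hv : constantCoeff (-ψ) = 0 := by rw [map_neg, hψ0, neg_zero]
  have hE0 : constantCoeff (expOf (-ψ)) = 1 := constantCoeff_expOf _
  have hE' : d⁄dX ℚ (expOf (-ψ)) = -(d⁄dX ℚ ψ) * expOf (-ψ) := by
    rw [derivative_expOf hv, map_neg]
  have hDψ0 : constantCoeff (d⁄dX ℚ ψ) = 1 := by
    rw [← coeff_zero_eq_constantCoeff, coeff_derivative]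
    simpa using H2
  have hD1 := congrArg (d⁄dX ℚ) H1
  simp only [Derivation.leibniz, smul_eq_mul, map_sub, Derivation.map_one_eq_zero,
    derivative_X, mul_one, zero_sub, mul_neg] at hD1
  have hkey : X * ((1 - ψ) * d⁄dX ℚ (d⁄dX ℚ ψ) - (d⁄dX ℚ ψ) ^ 2
      - (1 - ψ) * (d⁄dX ℚ ψ) ^ 2) = 0 := by
    linear_combination d⁄dX ℚ ψ * H1 - hD1
  have hbr : (1 - ψ) * d⁄dX ℚ (d⁄dX ℚ ψ) - (d⁄dX ℚ ψ) ^ 2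
      - (1 - ψ) * (d⁄dX ℚ ψ) ^ 2 = 0 :=
    (mul_eq_zero.mp hkey).resolve_left X_ne_zero
  have hDg : d⁄dX ℚ ((1 - ψ) * d⁄dX ℚ ψ * expOf (-ψ)) = d⁄dX ℚ (1 : ℚ⟦X⟧) := by
    simp only [Derivation.leibniz, smul_eq_mul, map_sub, Derivation.map_one_eq_zero,
      hE', map_one, zero_sub, mul_neg]
    linear_combination expOf (-ψ) * hbr
  have hg1 : (1 - ψ) * d⁄dX ℚ ψ * expOf (-ψ) = 1 := by
    refine derivative.ext hDg ?_
    rw [map_mul, map_mul, map_sub, map_one, hψ0, hDψ0, hE0]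
    norm_num
  have hT : d⁄dX ℚ (ψ * expOf (-ψ)) = d⁄dX ℚ (X : ℚ⟦X⟧) := by
    simp only [Derivation.leibniz, smul_eq_mul, hE', derivative_X]
    linear_combination hg1
  refine derivative.ext hT ?_
  rw [map_mul, hψ0, constantCoeff_X, zero_mul]

/-- The series `ψ(z) = Σ n²·h_n·zⁿ/(2n−2)! = z·φ′(z)`. -/
noncomputable def psiS (h : ℕ → ℚ) : PowerSeries ℚ :=
  PowerSeries.mk fun n => (n : ℚ) * ((n : ℚ) * h n / ((2 * n - 2).factorial : ℚ))

lemma psiS_eq (h : ℕ → ℚ) : psiS h = X * d⁄dX ℚ (phiSeries h) := by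
  ext n
  cases n with
  | zero => simp [psiS, phiSeries]
  | succ n =>
    rw [coeff_succ_X_mul, coeff_derivative, psiS, phiSeries, coeff_mk, coeff_mk]
    push_cast
    ring

lemma star (h : ℕ → ℚ)
    (hrec : ∀ n : ℕ, 1 ≤ n →
      h (n + 1) = ∑ l ∈ Finset.Icc 1 n,
        (((2 * n - 1).factorial : ℚ) * (l : ℚ) ^ 2 * ((n + 1 - l : ℕ) : ℚ) ^ 2) /
            (((2 * l - 2).factorial : ℚ) * ((2 * (n - l)).factorial : ℚ) * ((n : ℚ) + 1)) *
          h l * h (n + 1 - l)) :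
    (psiS h) ^ 2 = 2 * psiS h - 2 * phiSeries h := by
  have hC : (2 : ℚ⟦X⟧) = C 2 := (map_ofNat (C) 2).symm
  ext n
  rw [pow_two, coeff_mul, map_sub, hC, coeff_C_mul, coeff_C_mul,
    Finset.Nat.sum_antidiagonal_eq_sum_range_succ_mk]
  simp only [psiS, phiSeries, coeff_mk]
  match n with
  | 0 => norm_num
  | 1 => norm_num [Finset.sum_range_succ]
  | (m + 2) =>
    rw [show Finset.range (m + 2 + 1) = insert 0 (insert (m+2) (Finset.Icc 1 (m+1))) from by
      ext x; simp [Finset.mem_Icc, Finset.mem_range]; omega]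
    rw [Finset.sum_insert (by simp), Finset.sum_insert (by simp)]
    norm_num
    rw [hrec (m+1) (by omega)]
    simp only [Finset.sum_div, Finset.mul_sum]
    rw [← Finset.sum_sub_distrib]
    refine Finset.sum_congr rfl fun x hx => ?_
    simp only [Finset.mem_Icc] at hx
    obtain ⟨hx1, hx2⟩ := hx
    have e0 : m + 1 + 1 = m + 2 := rfl
    have e1 : 2 * (m + 2 - x) - 2 = 2 * (m + 1 - x) := by omega
    have e2 : 2 * (m + 1) - 1 = 2 * m + 1 := by omega
    have e3 : 2 * (m + 2) - 2 = 2 * m + 2 := by omega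
    rw [e0, e1, e2, e3]
    have ef : ((2 * m + 2).factorial : ℚ) = ((2 * m + 2 : ℕ) : ℚ) * ((2 * m + 1).factorial : ℚ) := by
      rw [show 2 * m + 2 = (2 * m + 1) + 1 from rfl, Nat.factorial_succ]
      push_cast
      ring
    have n1 : ((2 * x - 2).factorial : ℚ) ≠ 0 := by exact_mod_cast (Nat.factorial_pos _).ne'
    have n2 : ((2 * (m + 1 - x)).factorial : ℚ) ≠ 0 := by exact_mod_cast (Nat.factorial_pos _).ne'
    have n3 : ((2 * m + 1).factorial : ℚ) ≠ 0 := by exact_mod_cast (Nat.factorial_pos _).ne'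
    have n4 : ((m : ℚ) + 1) + 1 ≠ 0 := by positivity
    rw [ef]
    push_cast
    field_simp
    ring

end TranscendentalAux

/-- **The transcendental equation for the reduced `ℂP¹` potential.**
If `h₁ = 1` and `h` satisfies the recursion
`h_{n+1} = Σ_{l=1}^{n} ((2n−1)!·l²·(n+1−l)²)/((2l−2)!·(2(n−l))!·(n+1))·h_l·h_{n+1−l}`
for all `n ≥ 1`, and `φ(z) = Σ_{n≥1} n·h_n·zⁿ/(2n−2)!`, then there is a unique formal
power series `u ∈ ℚ[[z]]` with constant term `1` such that `u² = 1 − 2φ`, and this `u`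
satisfies `(1 − u)·exp(u − 1) = z` in `ℚ[[z]]`. -/
theorem transcendental_equation (h : ℕ → ℚ) (h1 : h 1 = 1)
    (hrec : ∀ n : ℕ, 1 ≤ n →
      h (n + 1) = ∑ l ∈ Finset.Icc 1 n,
        (((2 * n - 1).factorial : ℚ) * (l : ℚ) ^ 2 * ((n + 1 - l : ℕ) : ℚ) ^ 2) /
            (((2 * l - 2).factorial : ℚ) * ((2 * (n - l)).factorial : ℚ) * ((n : ℚ) + 1)) *
          h l * h (n + 1 - l)) :
    (∃! u : PowerSeries ℚ,
        constantCoeff u = 1 ∧ u ^ 2 = 1 - 2 * phiSeries h) ∧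
      ∀ u : PowerSeries ℚ, constantCoeff u = 1 → u ^ 2 = 1 - 2 * phiSeries h →
        (1 - u) * expOf (u - 1) = X := by
  classical
  set φ := phiSeries h with hφdef
  set ψ := TranscendentalAux.psiS h with hψdef
  have hstar : ψ ^ 2 = 2 * ψ - 2 * φ := TranscendentalAux.star h hrec
  have hψ0 : constantCoeff ψ = 0 := by
    rw [hψdef, TranscendentalAux.psiS, ← coeff_zero_eq_constantCoeff, coeff_mk]
    norm_num
  have hψ1 : coeff 1 ψ = 1 := by
    rw [hψdef, TranscendentalAux.psiS, coeff_mk]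
    norm_num [h1]
  have hu : constantCoeff (1 - ψ) = 1 := by
    rw [map_sub, map_one, hψ0, sub_zero]
  have husq : (1 - ψ) ^ 2 = 1 - 2 * φ := by linear_combination hstar
  have h2ne : (2 : ℚ⟦X⟧) ≠ 0 := fun hcon => by
    have := congrArg (constantCoeff) hcon
    rw [map_ofNat, map_zero] at this
    norm_num at this
  -- the functional equation for ψ
  have hstar' : ψ * ψ + φ + φ = ψ + ψ := by linear_combination hstar
  have hD := congrArg (d⁄dX ℚ) hstar'
  simp only [map_add, Derivation.leibniz, smul_eq_mul] at hD
  have hDφ : d⁄dX ℚ φ = (1 - ψ) * d⁄dX ℚ ψ :=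
    mul_left_cancel₀ h2ne
      (show (2 : ℚ⟦X⟧) * d⁄dX ℚ φ = 2 * ((1 - ψ) * d⁄dX ℚ ψ) by linear_combination hD)
  have H1 : ψ = X * ((1 - ψ) * d⁄dX ℚ ψ) := by
    rw [← hDφ]; exact TranscendentalAux.psiS_eq h
  constructor
  · refine ⟨1 - ψ, ⟨hu, husq⟩, ?_⟩
    rintro v ⟨hv1, hv2⟩
    have hvv : v ^ 2 = (1 - ψ) ^ 2 := hv2.trans husq.symm
    have hfac : (v - (1 - ψ)) * (v + (1 - ψ)) = 0 := by linear_combination hvv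
    have hne : v + (1 - ψ) ≠ 0 := fun hcon => by
      have := congrArg (constantCoeff) hcon
      rw [map_add, hv1, hu, map_zero] at this
      norm_num at this
    exact sub_eq_zero.mp ((mul_eq_zero.mp hfac).resolve_right hne)
  · intro u hu1 hu2
    have hw2 : (1 - u) ^ 2 = 2 * (1 - u) - 2 * φ := by linear_combination hu2
    have hfac : (ψ - (1 - u)) * (ψ + (1 - u) - 2) = 0 := by linear_combination hstar - hw2
    have hne : ψ + (1 - u) - 2 ≠ 0 := fun hcon => by
      have := congrArg (constantCoeff) hcon
      rw [map_sub, map_add, hψ0] at this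
      rw [map_sub, map_one, hu1, map_ofNat, map_zero] at this
      norm_num at this
    have hw : ψ = 1 - u := sub_eq_zero.mp ((mul_eq_zero.mp hfac).resolve_right hne)
    have hw' : u - 1 = -ψ := by rw [hw]; ring
    rw [show (1 : ℚ⟦X⟧) - u = ψ from hw.symm, hw']
    exact TranscendentalAux.core H1 hψ1
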